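/- arXiv:2301.04301 — 2 statements merged into one kernel-verified Lean document; each statement's English description precedes it below -/
import Mathlib

section
/- Evaluation of I↓_max on classical–quantum states: Let A be a finite index type, X a finite nonempty type, p a strictly positive probability vector on X, and for each x ∈ X let ρ_x be a density matrix on A. Set ρ_{AX} := Σ_x p(x) · ρ_x ⊗ E_xx. Then, in the extended reals, the infimum over density matrices τ_A on A and density matrices σ_X on X of D_max( ρ_{AX} ‖ τ_A ⊗ σ_X ) equals the infimum over density matrices τ_A on A and strictly positive probability vectors q on X of sup over x ∈ X of [ ln( p(x)/q(x) ) + D_max( ρ_x ‖ τ_A ) ]. (In particular, in the first infimum the second tensor factor may without loss of generality be restricted to diagonal, i.e. classical, states.) -/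
open Matrix
open scoped ComplexOrder Kronecker

/-- The max-relative entropy `D_max(P‖Q)`. -/
noncomputable def Dmax {n : Type*} [Fintype n] (P Q : Matrix n n ℂ) : EReal :=
  sInf {x : EReal | ∃ lam : ℝ, x = (lam : EReal) ∧ (Real.exp lam • Q - P).PosSemidef}

/-- A density matrix: positive semidefinite with trace 1. -/
def IsDensity {n : Type*} [Fintype n] (ρ : Matrix n n ℂ) : Prop :=
  ρ.PosSemidef ∧ ρ.trace = 1

section Toolkit

variable {n : Type*} [Fintype n]

theorem psd_smul_real {M : Matrix n n ℂ} {c : ℝ} (hM : M.PosSemidef) (hc : 0 ≤ c) :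
    (c • M).PosSemidef := by
  refine Matrix.PosSemidef.of_dotProduct_mulVec_nonneg ?_ ?_
  · unfold Matrix.IsHermitian
    rw [Matrix.conjTranspose_smul, hM.1, star_trivial]
  · intro x
    rw [Matrix.smul_mulVec, dotProduct_smul, Complex.real_smul]
    exact mul_nonneg (by exact_mod_cast hc) (hM.dotProduct_mulVec_nonneg x)

theorem psd_smul_iff {M : Matrix n n ℂ} {c : ℝ} (hc : 0 < c) :
    (c • M).PosSemidef ↔ M.PosSemidef := by
  constructor
  · intro h
    have := psd_smul_real h (c := c⁻¹) (by positivity)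
    rwa [smul_smul, inv_mul_cancel₀ hc.ne', one_smul] at this
  · exact fun h => psd_smul_real h hc.le

theorem psd_diag_nonneg {M : Matrix n n ℂ} (hM : M.PosSemidef) [DecidableEq n] (i : n) :
    0 ≤ M i i := by
  have := hM.dotProduct_mulVec_nonneg (Pi.single i 1)
  simpa [dotProduct, Pi.single_apply, apply_ite (star : ℂ → ℂ)] using this

theorem psd_trace_nonneg [DecidableEq n] {M : Matrix n n ℂ} (hM : M.PosSemidef) :
    0 ≤ M.trace :=
  Finset.sum_nonneg fun i _ => psd_diag_nonneg hM i

theorem Dmax_le {P Q : Matrix n n ℂ} {lam : ℝ} (h : (Real.exp lam • Q - P).PosSemidef) :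
    Dmax P Q ≤ (lam : EReal) :=
  sInf_le ⟨lam, rfl, h⟩

theorem le_Dmax {P Q : Matrix n n ℂ} {z : EReal}
    (h : ∀ lam : ℝ, (Real.exp lam • Q - P).PosSemidef → z ≤ (lam : EReal)) :
    z ≤ Dmax P Q :=
  le_sInf (by rintro w ⟨lam, rfl, hl⟩; exact h lam hl)

theorem Dmax_up {P Q : Matrix n n ℂ} (hQ : Q.PosSemidef) {lam mu : ℝ}
    (h : (Real.exp lam • Q - P).PosSemidef) (hlm : lam ≤ mu) :
    (Real.exp mu • Q - P).PosSemidef := by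
  have key : Real.exp mu • Q - P = (Real.exp lam • Q - P) + (Real.exp mu - Real.exp lam) • Q := by
    rw [sub_smul]; abel
  rw [key]
  exact h.add (psd_smul_real hQ (by have := Real.exp_le_exp.2 hlm; linarith))

theorem Dmax_lt_exists {P Q : Matrix n n ℂ} {t : EReal} (h : Dmax P Q < t) :
    ∃ lam : ℝ, (lam : EReal) < t ∧ (Real.exp lam • Q - P).PosSemidef := by
  obtain ⟨w, ⟨lam, rfl, hpsd⟩, hwt⟩ := sInf_lt_iff.mp h
  exact ⟨lam, hwt, hpsd⟩

theorem scale_iff {τ ρ : Matrix n n ℂ} {pp qq lam : ℝ} (hp : 0 < pp) (hq : 0 < qq) :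
    ((Real.exp lam * qq) • τ - pp • ρ).PosSemidef ↔
      (Real.exp (lam - Real.log (pp / qq)) • τ - ρ).PosSemidef := by
  have hexp : Real.exp (lam - Real.log (pp / qq)) = pp⁻¹ * (Real.exp lam * qq) := by
    rw [Real.exp_sub, Real.exp_log (div_pos hp hq)]
    field_simp
  have hkey : pp⁻¹ • ((Real.exp lam * qq) • τ - pp • ρ)
      = Real.exp (lam - Real.log (pp / qq)) • τ - ρ := by
    rw [smul_sub, smul_smul, smul_smul, inv_mul_cancel₀ hp.ne', one_smul, hexp]
  rw [← psd_smul_iff (M := (Real.exp lam * qq) • τ - pp • ρ) (inv_pos.2 hp), hkey]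

end Toolkit

section Blocks

variable {A X : Type*} [Fintype A] [Fintype X] [DecidableEq X]

theorem quad_block (N : Matrix (A × X) (A × X) ℂ) (x : X) (v : A → ℂ) :
    star (fun p : A × X => if p.2 = x then v p.1 else 0) ⬝ᵥ
      (N *ᵥ fun p : A × X => if p.2 = x then v p.1 else 0)
      = star v ⬝ᵥ ((Matrix.of fun a a' => N (a,x) (a',x)) *ᵥ v) := by
  simp only [dotProduct, mulVec, dotProduct, Pi.star_apply, Fintype.sum_prod_type,
    Matrix.of_apply, apply_ite (star : ℂ → ℂ), star_zero, mul_ite, ite_mul, mul_zero, zero_mul,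
    Finset.sum_ite_eq', Finset.mem_univ, if_true]

theorem sumkron_quad (M : X → Matrix A A ℂ) (w : A × X → ℂ) :
    star w ⬝ᵥ ((∑ x, M x ⊗ₖ Matrix.single x x (1:ℂ)) *ᵥ w)
      = ∑ x, star (fun a => w (a,x)) ⬝ᵥ (M x *ᵥ fun a => w (a,x)) := by
  simp only [dotProduct, mulVec, Matrix.sum_apply, Matrix.kroneckerMap_apply,
    Matrix.single, Matrix.of_apply, Fintype.sum_prod_type, Pi.star_apply,
    ite_and, mul_ite, ite_mul, mul_zero, zero_mul, mul_one,
    Finset.sum_ite_eq', Finset.sum_ite_eq, Finset.mem_univ, if_true]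
  rw [Finset.sum_comm]

theorem sumkron_apply (M : X → Matrix A A ℂ) (a a' : A) (y y' : X) :
    (∑ x, M x ⊗ₖ Matrix.single x x (1:ℂ)) (a,y) (a',y')
      = if y = y' then M y a a' else 0 := by
  simp only [Matrix.sum_apply, Matrix.kroneckerMap_apply, Matrix.single,
    Matrix.of_apply, ite_and, mul_ite, mul_one, mul_zero, Finset.sum_ite_eq',
    Finset.mem_univ, if_true]

theorem sumkron_isHermitian {M : X → Matrix A A ℂ} (h : ∀ x, (M x).IsHermitian) :
    (∑ x, M x ⊗ₖ Matrix.single x x (1:ℂ)).IsHermitian := by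
  apply Matrix.IsHermitian.ext
  rintro ⟨a,y⟩ ⟨a',y'⟩
  rw [sumkron_apply, sumkron_apply]
  by_cases hy : y = y'
  · subst hy; simp [(h y).apply]
  · simp [hy, Ne.symm hy]

theorem sumkron_psd {M : X → Matrix A A ℂ} (h : ∀ x, (M x).PosSemidef) :
    (∑ x, M x ⊗ₖ Matrix.single x x (1:ℂ)).PosSemidef := by
  refine .of_dotProduct_mulVec_nonneg (sumkron_isHermitian fun x => (h x).1) fun w => ?_
  rw [sumkron_quad]
  exact Finset.sum_nonneg fun x _ => (h x).dotProduct_mulVec_nonneg _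

theorem structure_eq (τ : Matrix A A ℂ) (ρ : X → Matrix A A ℂ) (p q : X → ℝ) (lam : ℝ) :
    Real.exp lam • (τ ⊗ₖ Matrix.diagonal (fun x => (q x : ℂ)))
        - ∑ x, p x • (ρ x ⊗ₖ Matrix.single x x (1:ℂ))
      = ∑ x, ((Real.exp lam * q x) • τ - p x • ρ x) ⊗ₖ Matrix.single x x (1:ℂ) := by
  ext ⟨a,y⟩ ⟨a',y'⟩
  rw [show (∑ x, ((Real.exp lam * q x) • τ - p x • ρ x) ⊗ₖ Matrix.single x x (1:ℂ))
      (a,y) (a',y') = _ from sumkron_apply _ a a' y y']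
  simp only [Matrix.sub_apply, Matrix.smul_apply, Matrix.sum_apply, Matrix.kroneckerMap_apply,
    Matrix.diagonal_apply, Matrix.single, Matrix.of_apply, ite_and, mul_ite, mul_one,
    mul_zero, smul_ite, smul_zero, Finset.sum_ite_eq', Finset.mem_univ, if_true,
    Complex.real_smul, Complex.ofReal_mul]
  by_cases hy : y = y'
  · subst hy; simp; ring
  · simp [hy]

theorem block_psd {N : Matrix (A × X) (A × X) ℂ} (hN : N.PosSemidef) (x : X) :
    (Matrix.of fun a a' => N (a,x) (a',x) : Matrix A A ℂ).PosSemidef := by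
  refine Matrix.PosSemidef.of_dotProduct_mulVec_nonneg ?_ ?_
  · apply Matrix.IsHermitian.ext
    intro a a'
    show star (Matrix.of (fun a a' => N (a,x) (a',x)) a' a) = _
    simp only [Matrix.of_apply]
    exact hN.1.apply _ _
  · intro v
    rw [← quad_block]
    exact hN.dotProduct_mulVec_nonneg _

theorem block_entry (τ : Matrix A A ℂ) (σ : Matrix X X ℂ) (ρ : X → Matrix A A ℂ)
    (p : X → ℝ) (lam : ℝ) (x : X) (hσx : σ x x = ((σ x x).re : ℂ)) :
    (Matrix.of fun a a' =>
        (Real.exp lam • (τ ⊗ₖ σ)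
          - ∑ z, p z • (ρ z ⊗ₖ Matrix.single z z (1:ℂ))) (a,x) (a',x))
      = (Real.exp lam * (σ x x).re) • τ - p x • ρ x := by
  ext a a'
  simp only [Matrix.of_apply, Matrix.sub_apply, Matrix.smul_apply, Matrix.sum_apply,
    Matrix.kroneckerMap_apply, Matrix.single, Matrix.of_apply, ite_and, mul_ite, mul_one,
    mul_zero, smul_ite, smul_zero, Finset.sum_ite_eq', Finset.mem_univ, if_true,
    Complex.real_smul, Complex.ofReal_mul]
  rw [hσx]
  simp
  ring

end Blocks

/-- Evaluation of `I↓_max` on classical–quantum states: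
`inf_{τ_A, σ_X} D_max(ρ_AX ‖ τ_A ⊗ σ_X)
  = inf_{τ_A, q > 0} sup_x [ ln(p(x)/q(x)) + D_max(ρ_x ‖ τ_A) ]`. -/
theorem idownmax_cq_eval
    {A : Type*} [Fintype A] {X : Type*} [Fintype X] [DecidableEq X] [Nonempty X]
    (p : X → ℝ) (hp : ∀ x, 0 < p x) (hpsum : ∑ x, p x = 1)
    (ρ : X → Matrix A A ℂ) (hρ : ∀ x, IsDensity (ρ x)) :
    let ρAX : Matrix (A × X) (A × X) ℂ :=
      ∑ x, p x • (ρ x ⊗ₖ Matrix.single x x (1 : ℂ))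
    sInf {z : EReal | ∃ (τ : Matrix A A ℂ) (σ : Matrix X X ℂ),
        IsDensity τ ∧ IsDensity σ ∧ z = Dmax ρAX (τ ⊗ₖ σ)}
      = sInf {z : EReal | ∃ (τ : Matrix A A ℂ) (q : X → ℝ),
        IsDensity τ ∧ (∀ x, 0 < q x) ∧ (∑ x, q x = 1) ∧
        z = ⨆ x, ((Real.log (p x / q x) : EReal) + Dmax (ρ x) τ)} := by
  classical
  intro ρAX
  have hρAX : ρAX = ∑ x, p x • (ρ x ⊗ₖ Matrix.single x x (1 : ℂ)) := rfl
  apply le_antisymm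
  · -- LHS ≤ RHS
    apply le_sInf
    rintro z ⟨τ, q, hτ, hq, hqsum, rfl⟩
    have hσdens : IsDensity (Matrix.diagonal fun x => (q x : ℂ)) := by
      constructor
      · exact Matrix.PosSemidef.diagonal fun x => Complex.zero_le_real.2 (hq x).le
      · rw [Matrix.trace_diagonal]
        rw [show (∑ x, ((q x : ℂ))) = ((∑ x, q x : ℝ) : ℂ) by push_cast; ring]
        rw [hqsum]; norm_num
    refine le_trans (sInf_le ⟨τ, Matrix.diagonal fun x => (q x : ℂ), hτ, hσdens, rfl⟩) ?_
    rw [← EReal.le_of_forall_lt_iff_le]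
    intro r hr
    have hblocks : ∀ x, ((Real.exp r * q x) • τ - p x • ρ x).PosSemidef := by
      intro x
      have hx : ((Real.log (p x / q x) : ℝ) : EReal) + Dmax (ρ x) τ < (r : EReal) :=
        lt_of_le_of_lt (le_iSup (fun x => ((Real.log (p x / q x) : ℝ) : EReal) + Dmax (ρ x) τ) x) hr
      have hdx : Dmax (ρ x) τ < ((r - Real.log (p x / q x) : ℝ) : EReal) := by
        by_contra h'
        push_neg at h'
        have h2 := add_le_add_right h' ((Real.log (p x / q x) : ℝ) : EReal)
        rw [← EReal.coe_add] at h2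
        rw [show Real.log (p x / q x) + (r - Real.log (p x / q x)) = r by ring] at h2
        exact absurd (h2.trans_lt hx) (lt_irrefl _)
      obtain ⟨mu, hmu_lt, hmu⟩ := Dmax_lt_exists hdx
      have hmu' : mu ≤ r - Real.log (p x / q x) := (EReal.coe_lt_coe_iff.mp hmu_lt).le
      exact (scale_iff (hp x) (hq x)).2 (Dmax_up hτ.1 hmu hmu')
    have hpsd : (Real.exp r • (τ ⊗ₖ Matrix.diagonal fun x => (q x : ℂ)) - ρAX).PosSemidef := by
      rw [hρAX, structure_eq]
      exact sumkron_psd hblocks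
    exact Dmax_le hpsd
  · -- RHS ≤ LHS
    apply le_sInf
    rintro z ⟨τ, σ, hτ, hσ, rfl⟩
    have hdiagreal : ∀ x : X, σ x x = ((σ x x).re : ℂ) := by
      intro x
      have h0 := psd_diag_nonneg hσ.1 x
      have him := (Complex.le_def.mp h0).2
      exact (Complex.ext (by simp) (by simp [← him])).symm
    by_cases hall : ∀ x, 0 < (σ x x).re
    · -- all diagonal entries positive
      have hqsum : ∑ x, (σ x x).re = 1 := by
        have h1 : ∑ x, σ x x = 1 := hσ.2
        have := congrArg Complex.re h1
        simpa using this
      refine le_trans (sInf_le ⟨τ, fun x => (σ x x).re, hτ, hall, hqsum, rfl⟩) ?_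
      apply le_Dmax
      intro lam hlam
      apply iSup_le
      intro x
      have hb := block_psd hlam x
      rw [hρAX, block_entry τ σ ρ p lam x (hdiagreal x)] at hb
      have hd := Dmax_le ((scale_iff (hp x) (hall x)).1 hb)
      calc ((Real.log (p x / (σ x x).re) : ℝ) : EReal) + Dmax (ρ x) τ
          ≤ ((Real.log (p x / (σ x x).re) : ℝ) : EReal)
              + ((lam - Real.log (p x / (σ x x).re) : ℝ) : EReal) := add_le_add_right hd _
        _ = ((lam : ℝ) : EReal) := by
            rw [← EReal.coe_add]
            norm_num
    · -- some diagonal entry vanishes: Dmax is ⊤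
      push_neg at hall
      obtain ⟨x₀, hx₀⟩ := hall
      have hq0 : (σ x₀ x₀).re = 0 := by
        have h0 := psd_diag_nonneg hσ.1 x₀
        have := (Complex.le_def.mp h0).1
        simp at this
        linarith
      have hempty : {w : EReal | ∃ lam : ℝ, w = (lam : EReal)
          ∧ (Real.exp lam • (τ ⊗ₖ σ) - ρAX).PosSemidef} = ∅ := by
        apply Set.eq_empty_iff_forall_notMem.2
        rintro w ⟨lam, rfl, hlam⟩
        have hb := block_psd hlam x₀
        rw [hρAX, block_entry τ σ ρ p lam x₀ (hdiagreal x₀), hq0, mul_zero, zero_smul,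
          zero_sub] at hb
        have htr := psd_trace_nonneg hb
        rw [Matrix.trace_neg, Matrix.trace_smul, (hρ x₀).2, Complex.real_smul, mul_one] at htr
        have := (Complex.le_def.mp htr).1
        simp at this
        linarith [hp x₀]
      have : Dmax ρAX (τ ⊗ₖ σ) = ⊤ := by
        rw [Dmax, hempty, sInf_empty]
      rw [this]
      exact le_top
end

section
/- Pinching can only decrease D_max against classical–quantum states: Let A be a finite index type, X a finite nonempty type, p a probability vector on X, and for each x ∈ X let ρ_x be a density matrix on A; set ρ_{AX} := Σ_x p(x) · ρ_x ⊗ E_xx. For any positive semidefinite τ_A on A and any density matrix σ_X on X, let Δ(σ_X) denote the diagonal matrix with the same diagonal entries as σ_X. Then D_max( ρ_{AX} ‖ τ_A ⊗ Δ(σ_X) ) ≤ D_max( ρ_{AX} ‖ τ_A ⊗ σ_X ) in the extended reals. -/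
open Matrix
open scoped ComplexOrder Kronecker

lemma sandwich {X : Type*} [Fintype X] [DecidableEq X] (T : Matrix X X ℂ) (x : X) :
    Matrix.single x x (1:ℂ) * T * Matrix.single x x 1
      = T x x • Matrix.single x x 1 := by
  ext a b
  simp only [Matrix.mul_apply, Matrix.single, Matrix.smul_apply, Matrix.of_apply,
    ite_and, smul_eq_mul]
  simp [Finset.sum_ite_eq, Finset.sum_ite_eq', ite_and]
  split_ifs <;> simp_all

lemma my_diag_sum {X : Type*} [Fintype X] [DecidableEq X] (d : X → ℂ) :
    ∑ x, d x • Matrix.single x x (1:ℂ) = Matrix.diagonal d := by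
  ext a b
  simp [Matrix.single, Matrix.diagonal, Matrix.sum_apply, ite_and, Finset.sum_ite_eq]

lemma kron_sum_right {A X I : Type*} [Fintype X] (S : Matrix A A ℂ) (s : Finset I)
    (f : I → Matrix X X ℂ) : S ⊗ₖ (∑ x ∈ s, f x) = ∑ x ∈ s, S ⊗ₖ f x := by
  ext p q
  simp [Matrix.sum_apply, Finset.mul_sum]

lemma pinch_kron {A X : Type*} [Fintype A] [DecidableEq A] [Fintype X] [DecidableEq X]
    (S : Matrix A A ℂ) (T : Matrix X X ℂ) :
    ∑ x, ((1 : Matrix A A ℂ) ⊗ₖ Matrix.single x x (1:ℂ)) * (S ⊗ₖ T) *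
        ((1 : Matrix A A ℂ) ⊗ₖ Matrix.single x x (1:ℂ))
      = S ⊗ₖ Matrix.diagonal (fun x => T x x) := by
  rw [← my_diag_sum, kron_sum_right]
  refine Finset.sum_congr rfl fun x _ => ?_
  rw [← Matrix.mul_kronecker_mul, ← Matrix.mul_kronecker_mul, one_mul, mul_one, sandwich,
    Matrix.kronecker_smul]

lemma diag_of_E {X : Type*} [DecidableEq X] (y : X) :
    Matrix.diagonal (fun x => Matrix.single y y (1:ℂ) x x)
      = Matrix.single y y 1 := by
  ext a b
  simp [Matrix.diagonal, Matrix.single, ite_and]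
  split_ifs <;> simp_all

lemma P_herm {A X : Type*} [Fintype A] [DecidableEq A] [Fintype X] [DecidableEq X] (x : X) :
    ((1 : Matrix A A ℂ) ⊗ₖ Matrix.single x x (1:ℂ))ᴴ
      = (1 : Matrix A A ℂ) ⊗ₖ Matrix.single x x 1 := by
  ext p q
  simp [Matrix.conjTranspose_apply, Matrix.single, Matrix.one_apply, ite_and]
  split_ifs <;> simp_all [eq_comm]

lemma psd_sum {n I : Type*} [Fintype n] (s : Finset I) (f : I → Matrix n n ℂ)
    (h : ∀ i ∈ s, (f i).PosSemidef) : (∑ i ∈ s, f i).PosSemidef := by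
  classical
  induction s using Finset.induction_on with
  | empty => simpa using Matrix.PosSemidef.zero
  | insert _ _ hni ih =>
    rw [Finset.sum_insert hni]
    exact (h _ (Finset.mem_insert_self _ _)).add (ih fun i hi => h i (Finset.mem_insert_of_mem hi))

/-- Pinching the second argument to its diagonal can only decrease `D_max`
against a classical–quantum state. -/
theorem dmax_pinching_cq
    {A : Type*} [Fintype A] {X : Type*} [Fintype X] [DecidableEq X] [Nonempty X]
    (p : X → ℝ) (hp : ∀ x, 0 ≤ p x) (hpsum : ∑ x, p x = 1)
    (ρ : X → Matrix A A ℂ) (hρ : ∀ x, IsDensity (ρ x))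
    (τ : Matrix A A ℂ) (hτ : τ.PosSemidef)
    (σ : Matrix X X ℂ) (hσ : IsDensity σ) :
    let ρAX : Matrix (A × X) (A × X) ℂ :=
      ∑ x, p x • (ρ x ⊗ₖ Matrix.single x x (1 : ℂ))
    Dmax ρAX (τ ⊗ₖ Matrix.diagonal (fun x => σ x x)) ≤ Dmax ρAX (τ ⊗ₖ σ) := by
  classical
  intro ρAX
  unfold Dmax
  apply sInf_le_sInf
  rintro e ⟨lam, rfl, h⟩
  refine ⟨lam, rfl, ?_⟩
  set P : X → Matrix (A × X) (A × X) ℂ :=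
    fun x => (1 : Matrix A A ℂ) ⊗ₖ Matrix.single x x (1:ℂ) with hP
  have key : (∑ x, P x * (Real.exp lam • (τ ⊗ₖ σ) - ρAX) * P x).PosSemidef := by
    refine psd_sum _ _ fun x _ => ?_
    have := h.mul_mul_conjTranspose_same (P x)
    rwa [hP, P_herm] at this
  have hfix : ∑ x, P x * ρAX * P x = ρAX := by
    have : ∀ x, P x * ρAX * P x
        = ∑ y, p y • (P x * (ρ y ⊗ₖ Matrix.single y y (1:ℂ)) * P x) := by
      intro x
      simp only [ρAX, Finset.mul_sum, Finset.sum_mul, Matrix.mul_smul, Matrix.smul_mul]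
    rw [Finset.sum_congr rfl fun x _ => this x, Finset.sum_comm]
    refine Finset.sum_congr rfl fun y _ => ?_
    rw [← Finset.smul_sum, pinch_kron, diag_of_E]
  have hpin : ∑ x, P x * (Real.exp lam • (τ ⊗ₖ σ) - ρAX) * P x
      = Real.exp lam • (τ ⊗ₖ Matrix.diagonal (fun x => σ x x)) - ρAX := by
    have : ∀ x, P x * (Real.exp lam • (τ ⊗ₖ σ) - ρAX) * P x
        = Real.exp lam • (P x * (τ ⊗ₖ σ) * P x) - P x * ρAX * P x := by
      intro x
      rw [Matrix.mul_sub, Matrix.sub_mul, Matrix.mul_smul, Matrix.smul_mul]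
    rw [Finset.sum_congr rfl fun x _ => this x, Finset.sum_sub_distrib, ← Finset.smul_sum,
      pinch_kron, hfix]
  rwa [hpin] at key
end
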